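/- Let n ≥ 1 be a natural number and let a be a real number with 1 ≤ a ≤ n. Then 2·√a ≤ min_{m ∈ {1,…,n}} √m·(1 + a/m) ≤ 2·√2·√a. -/

import Mathlib

open Finset

theorem stmt17 (n : ℕ) (hn : 1 ≤ n) (a : ℝ) (ha1 : 1 ≤ a) (han : a ≤ n) :
    2 * Real.sqrt a ≤
      (Finset.Icc 1 n).inf' (Finset.nonempty_Icc.mpr hn)
        (fun m => Real.sqrt m * (1 + a / m)) ∧
    (Finset.Icc 1 n).inf' (Finset.nonempty_Icc.mpr hn)
        (fun m => Real.sqrt m * (1 + a / m)) ≤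
      2 * Real.sqrt 2 * Real.sqrt a := by
  have ha0 : (0:ℝ) ≤ a := by linarith
  have ht : Real.sqrt a ^ 2 = a := Real.sq_sqrt ha0
  have ht0 : 0 ≤ Real.sqrt a := Real.sqrt_nonneg a
  constructor
  · apply Finset.le_inf'
    intro m hm
    simp only [Finset.mem_Icc] at hm
    have hm1 : (1:ℝ) ≤ (m:ℝ) := by exact_mod_cast hm.1
    have hs0 : 0 < Real.sqrt m := Real.sqrt_pos.mpr (by linarith)
    have hs : Real.sqrt m ^ 2 = (m:ℝ) := Real.sq_sqrt (by linarith)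
    rw [← mul_le_mul_iff_of_pos_right hs0]
    have : Real.sqrt m * (1 + a / m) * Real.sqrt m = m + a := by
      field_simp; linear_combination hs
    rw [this]
    nlinarith [sq_nonneg (Real.sqrt m - Real.sqrt a), hs, ht]
  · have hmem : ⌈a⌉₊ ∈ Finset.Icc 1 n := by
      simp only [Finset.mem_Icc]
      exact ⟨Nat.one_le_ceil_iff.mpr (by linarith), Nat.ceil_le.mpr han⟩
    refine le_trans (Finset.inf'_le _ hmem) ?_
    have hle : a ≤ (⌈a⌉₊ : ℝ) := Nat.le_ceil a
    have hmpos : (0:ℝ) < (⌈a⌉₊ : ℝ) := by linarith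
    have h1 : a / (⌈a⌉₊ : ℝ) ≤ 1 := (div_le_one hmpos).mpr hle
    have h2 : Real.sqrt (⌈a⌉₊ : ℝ) ≤ Real.sqrt 2 * Real.sqrt a := by
      rw [← Real.sqrt_mul (by norm_num)]
      apply Real.sqrt_le_sqrt
      have : (⌈a⌉₊ : ℝ) ≤ a + 1 := le_of_lt (Nat.ceil_lt_add_one ha0)
      linarith
    have h3 : 0 ≤ Real.sqrt (⌈a⌉₊ : ℝ) := Real.sqrt_nonneg _
    calc Real.sqrt (⌈a⌉₊ : ℝ) * (1 + a / (⌈a⌉₊ : ℝ))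
        ≤ Real.sqrt (⌈a⌉₊ : ℝ) * 2 := by nlinarith
      _ ≤ Real.sqrt 2 * Real.sqrt a * 2 := by nlinarith
      _ = 2 * Real.sqrt 2 * Real.sqrt a := by ring
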